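/- Let d ≥ 1 be an integer and v > 0 a real number. Suppose Γ ⊆ [0,∞) × [0,∞) is a c_RLF-monotone set, i.e., for all (x₁,y₁), (x₂,y₂) ∈ Γ one has c_RLF(x₁,y₁) + c_RLF(x₂,y₂) ≤ c_RLF(x₁,y₂) + c_RLF(x₂,y₁). Then Γ is antitone: for all (x₁,y₁), (x₂,y₂) ∈ Γ, x₁ < x₂ implies y₁ ≥ y₂. -/

import Mathlib

noncomputable section

set_option maxHeartbeats 1000000

/-- The random Laplace feature cost function
`c_RLF(x,y) = Σ_k v^(2k) (x² + y²)^k / (4^k k! Γ(k + d/2))`. -/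
def cRLF (d : ℕ) (v : ℝ) (x y : ℝ) : ℝ :=
  ∑' k : ℕ,
    v ^ (2 * k) * (x ^ 2 + y ^ 2) ^ k /
      (4 ^ k * (Nat.factorial k) * Real.Gamma ((k : ℝ) + d / 2))

def cTerm (d : ℕ) (v : ℝ) (s : ℝ) (k : ℕ) : ℝ :=
  v ^ (2 * k) * s ^ k / (4 ^ k * (Nat.factorial k) * Real.Gamma ((k : ℝ) + d / 2))

lemma gamma_arg_pos (d : ℕ) (hd : 1 ≤ d) (k : ℕ) : (0 : ℝ) < (k : ℝ) + d / 2 := by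
  have : (1 : ℝ) ≤ (d : ℝ) := by exact_mod_cast hd
  have hk : (0 : ℝ) ≤ (k : ℝ) := Nat.cast_nonneg k
  linarith

lemma gamma_pos (d : ℕ) (hd : 1 ≤ d) (k : ℕ) :
    0 < Real.Gamma ((k : ℝ) + d / 2) :=
  Real.Gamma_pos_of_pos (gamma_arg_pos d hd k)

lemma denom_pos (d : ℕ) (hd : 1 ≤ d) (k : ℕ) :
    (0 : ℝ) < 4 ^ k * (Nat.factorial k) * Real.Gamma ((k : ℝ) + d / 2) := by
  have hfac : (0 : ℝ) < (Nat.factorial k : ℝ) := by exact_mod_cast Nat.factorial_pos k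
  exact mul_pos (mul_pos (by positivity) hfac) (gamma_pos d hd k)

lemma gamma_lb (d : ℕ) (hd : 1 ≤ d) (k : ℕ) :
    Real.Gamma ((d : ℝ) / 2) * (Nat.factorial k) / 2 ^ k ≤ Real.Gamma ((k : ℝ) + d / 2) := by
  induction k with
  | zero => simp
  | succ k ih =>
    have hd1 : (1 : ℝ) ≤ (d : ℝ) := by exact_mod_cast hd
    have harg : ((k + 1 : ℕ) : ℝ) + d / 2 = ((k : ℝ) + d / 2) + 1 := by push_cast; ring
    rw [harg, Real.Gamma_add_one (ne_of_gt (gamma_arg_pos d hd k))]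
    have hpos : (0 : ℝ) < (k : ℝ) + d / 2 := gamma_arg_pos d hd k
    have hγ := gamma_pos d hd k
    have hfac : (0 : ℝ) < (Nat.factorial k : ℝ) := by exact_mod_cast Nat.factorial_pos k
    have hΓd : 0 < Real.Gamma ((d : ℝ) / 2) := Real.Gamma_pos_of_pos (by linarith)
    have hstep : ((k : ℝ) + 1) / 2 ≤ (k : ℝ) + d / 2 := by
      have : (0 : ℝ) ≤ (k : ℝ) := Nat.cast_nonneg k
      linarith
    have h2k : (0 : ℝ) < 2 ^ k := by positivity
    calc Real.Gamma ((d : ℝ) / 2) * (Nat.factorial (k + 1)) / 2 ^ (k + 1)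
        = (((k : ℝ) + 1) / 2) * (Real.Gamma ((d : ℝ) / 2) * (Nat.factorial k) / 2 ^ k) := by
          rw [Nat.factorial_succ]; push_cast; field_simp; ring
      _ ≤ ((k : ℝ) + d / 2) * (Real.Gamma ((d : ℝ) / 2) * (Nat.factorial k) / 2 ^ k) := by
          apply mul_le_mul_of_nonneg_right hstep; positivity
      _ ≤ ((k : ℝ) + d / 2) * Real.Gamma ((k : ℝ) + d / 2) :=
          mul_le_mul_of_nonneg_left ih (le_of_lt hpos)

lemma summable_cTerm (d : ℕ) (hd : 1 ≤ d) (v s : ℝ) (hs : 0 ≤ s) :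
    Summable (cTerm d v s) := by
  have hΓd : 0 < Real.Gamma ((d : ℝ) / 2) := by
    apply Real.Gamma_pos_of_pos
    have : (1 : ℝ) ≤ (d : ℝ) := by exact_mod_cast hd
    linarith
  have hg : Summable (fun k : ℕ => (1 / Real.Gamma ((d : ℝ) / 2)) * ((v ^ 2 * s / 2) ^ k / (Nat.factorial k))) :=
    ((Real.summable_pow_div_factorial (v ^ 2 * s / 2)).mul_left _)
  refine Summable.of_nonneg_of_le ?_ ?_ hg
  · intro k
    have hnum : 0 ≤ v ^ (2 * k) * s ^ k :=
      mul_nonneg (by rw [pow_mul]; positivity) (pow_nonneg hs k)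
    exact div_nonneg hnum (denom_pos d hd k).le
  · intro k
    have hγ := gamma_pos d hd k
    have hlb := gamma_lb d hd k
    have hfac : (0 : ℝ) < (Nat.factorial k : ℝ) := by exact_mod_cast Nat.factorial_pos k
    have hfac1 : (1 : ℝ) ≤ (Nat.factorial k : ℝ) := by exact_mod_cast Nat.factorial_pos k
    have h2k : (0 : ℝ) < 2 ^ k := by positivity
    have hlbpos : (0 : ℝ) < Real.Gamma ((d : ℝ) / 2) * (Nat.factorial k) / 2 ^ k := div_pos (mul_pos hΓd hfac) h2k
    have hnum : 0 ≤ v ^ (2 * k) * s ^ k :=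
      mul_nonneg (by rw [pow_mul]; positivity) (pow_nonneg hs k)
    unfold cTerm
    calc v ^ (2 * k) * s ^ k / (4 ^ k * (Nat.factorial k) * Real.Gamma ((k : ℝ) + d / 2))
        ≤ v ^ (2 * k) * s ^ k /
            (4 ^ k * (Nat.factorial k) * (Real.Gamma ((d : ℝ) / 2) * (Nat.factorial k) / 2 ^ k)) := by
          apply div_le_div_of_nonneg_left hnum
          · positivity
          · apply mul_le_mul_of_nonneg_left hlb; positivity
      _ = (1 / Real.Gamma ((d : ℝ) / 2)) * ((v ^ 2 * s / 2) ^ k / ((Nat.factorial k) * (Nat.factorial k))) := by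
          rw [show (4:ℝ) = 2^2 by norm_num, ← pow_mul, pow_mul v, div_pow, mul_pow]
          field_simp
          ring
      _ ≤ (1 / Real.Gamma ((d : ℝ) / 2)) * ((v ^ 2 * s / 2) ^ k / (Nat.factorial k)) := by
          apply mul_le_mul_of_nonneg_left _ (by positivity)
          apply div_le_div_of_nonneg_left (by positivity) hfac
          nlinarith

/-- Rearrangement inequality for powers. -/
lemma pow_rearrange {a b c e : ℝ} (ha : 0 ≤ a) (hc : 0 ≤ c) (hab : a ≤ b) (hce : c ≤ e)
    (k : ℕ) : (a + e) ^ k + (b + c) ^ k ≤ (a + c) ^ k + (b + e) ^ k := by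
  have h1 := geom_sum₂_mul (b + e) (a + e) k
  have h2 := geom_sum₂_mul (b + c) (a + c) k
  have hsum : (∑ i ∈ Finset.range k, (b + c) ^ i * (a + c) ^ (k - 1 - i)) ≤
      (∑ i ∈ Finset.range k, (b + e) ^ i * (a + e) ^ (k - 1 - i)) := by
    apply Finset.sum_le_sum
    intro i _
    apply mul_le_mul (pow_le_pow_left₀ (by linarith) (by linarith) i)
      (pow_le_pow_left₀ (by linarith) (by linarith) _)
      (pow_nonneg (by linarith) _) (pow_nonneg (by linarith) _)
  have hba : (0 : ℝ) ≤ b - a := by linarith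
  have := mul_le_mul_of_nonneg_right hsum hba
  have e1 : (b + e) - (a + e) = b - a := by ring
  have e2 : (b + c) - (a + c) = b - a := by ring
  rw [e1] at h1; rw [e2] at h2
  linarith

/-- Any `c_RLF`-monotone subset of `[0,∞) × [0,∞)` is antitone: if `x₁ < x₂` then `y₁ ≥ y₂`
for points `(x₁,y₁), (x₂,y₂)` of the set. -/
theorem cRLF_monotone_set_antitone (d : ℕ) (hd : 1 ≤ d) (v : ℝ) (hv : 0 < v)
    (Γ : Set (ℝ × ℝ)) (hΓ : Γ ⊆ Set.Ici (0 : ℝ) ×ˢ Set.Ici (0 : ℝ))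
    (hmono : ∀ p ∈ Γ, ∀ q ∈ Γ,
      cRLF d v p.1 p.2 + cRLF d v q.1 q.2 ≤ cRLF d v p.1 q.2 + cRLF d v q.1 p.2) :
    ∀ p ∈ Γ, ∀ q ∈ Γ, p.1 < q.1 → q.2 ≤ p.2 := by
  intro p hp q hq hx
  by_contra hcon
  push_neg at hcon
  obtain ⟨hp1, hp2⟩ := hΓ hp
  obtain ⟨hq1, hq2⟩ := hΓ hq
  simp only [Set.mem_Ici] at hp1 hp2 hq1 hq2
  set a := p.1 ^ 2 with ha_def
  set b := q.1 ^ 2 with hb_def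
  set c := p.2 ^ 2 with hc_def
  set e := q.2 ^ 2 with he_def
  have ha : 0 ≤ a := sq_nonneg _
  have hc : 0 ≤ c := sq_nonneg _
  have hab : a < b := by nlinarith
  have hce : c < e := by nlinarith
  -- summability
  have Sae := summable_cTerm d hd v (a + e) (by positivity)
  have Sbc := summable_cTerm d hd v (b + c) (by positivity)
  have Sac := summable_cTerm d hd v (a + c) (by positivity)
  have Sbe := summable_cTerm d hd v (b + e) (by positivity)
  -- termwise inequality
  have hle : ∀ k, cTerm d v (a + e) k + cTerm d v (b + c) k ≤
      cTerm d v (a + c) k + cTerm d v (b + e) k := by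
    intro k
    have hγ := gamma_pos d hd k
    have hD : (0 : ℝ) < 4 ^ k * (Nat.factorial k) * Real.Gamma ((k : ℝ) + d / 2) := by
      have hfac : (0 : ℝ) < (Nat.factorial k : ℝ) := by exact_mod_cast Nat.factorial_pos k
      positivity
    have key := pow_rearrange ha hc hab.le hce.le k
    have hvk : (0 : ℝ) ≤ v ^ (2 * k) := by positivity
    unfold cTerm
    rw [← add_div, ← add_div, div_le_div_iff₀ hD hD]
    nlinarith [mul_le_mul_of_nonneg_right (mul_le_mul_of_nonneg_left key hvk) hD.le]
  have hstrict : cTerm d v (a + e) 2 + cTerm d v (b + c) 2 <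
      cTerm d v (a + c) 2 + cTerm d v (b + e) 2 := by
    have hγ := gamma_pos d hd 2
    have hD : (0 : ℝ) < 4 ^ 2 * (Nat.factorial 2) * Real.Gamma ((2 : ℕ) + (d : ℝ) / 2) := by
      have hfac : (0 : ℝ) < (Nat.factorial 2 : ℝ) := by norm_num
      positivity
    have key : (a + e) ^ 2 + (b + c) ^ 2 < (a + c) ^ 2 + (b + e) ^ 2 := by nlinarith
    have hvk : (0 : ℝ) < v ^ (2 * 2) := by positivity
    unfold cTerm
    rw [← add_div, ← add_div, div_lt_div_iff₀ hD hD]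
    nlinarith [mul_lt_mul_of_pos_right (mul_lt_mul_of_pos_left key hvk) hD]
  have hlt : (∑' k, (cTerm d v (a + e) k + cTerm d v (b + c) k)) <
      (∑' k, (cTerm d v (a + c) k + cTerm d v (b + e) k)) :=
    Summable.tsum_lt_tsum (fun k => hle k) hstrict (Sae.add Sbc) (Sac.add Sbe)
  rw [Summable.tsum_add Sae Sbc, Summable.tsum_add Sac Sbe] at hlt
  have hm := hmono p hp q hq
  have eac : cRLF d v p.1 p.2 = ∑' k, cTerm d v (a + c) k := rfl
  have ebe : cRLF d v q.1 q.2 = ∑' k, cTerm d v (b + e) k := rfl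
  have eae : cRLF d v p.1 q.2 = ∑' k, cTerm d v (a + e) k := rfl
  have ebc : cRLF d v q.1 p.2 = ∑' k, cTerm d v (b + c) k := rfl
  rw [eac, ebe, eae, ebc] at hm
  linarith

end
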